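/- If φ : ℝ⁺ → ℝ is continuous, satisfies ∑_{k∈ℤ} φ(e^{-k}u) = 1 for all u > 0, M₀(φ) := sup_u ∑_k |φ(e^{-k}u)| < ∞, and lim_{r→∞} ∑_{|k - log u| > r} |φ(e^{-k}u)| = 0 uniformly in u, then for any bounded function f : ℝ⁺ → ℝ and any continuity point x > 0 of f, the generalized exponential sampling series (S_w^φ f)(x) = ∑_{k∈ℤ} f(e^{k/w}) φ(e^{-k} x^w) converges to f(x) as w → +∞. -/

import Mathlib

open Real Filter

/-- The generalized exponential sampling operator
`(S_w^φ f)(x) = ∑_{k∈ℤ} f(e^{k/w}) φ(e^{-k} x^w)`. -/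
noncomputable def expSampling (φ f : ℝ → ℝ) (w x : ℝ) : ℝ :=
  ∑' k : ℤ, f (Real.exp (k / w)) * φ (Real.exp (-k) * x ^ w)

/-- Pointwise convergence of the generalized exponential sampling series. -/
theorem pointwise_convergence
    (φ f : ℝ → ℝ)
    (hφcont : ContinuousOn φ (Set.Ioi (0:ℝ)))
    (hsum : ∀ u : ℝ, 0 < u → Summable fun k : ℤ => |φ (Real.exp (-k) * u)|)
    (hpart : ∀ u : ℝ, 0 < u → ∑' k : ℤ, φ (Real.exp (-k) * u) = 1)
    (hM0 : ∃ M : ℝ, ∀ u : ℝ, 0 < u → ∑' k : ℤ, |φ (Real.exp (-k) * u)| ≤ M)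
    (htail : ∀ ε > (0:ℝ), ∃ r₀ : ℝ, ∀ r ≥ r₀, ∀ u : ℝ, 0 < u →
      ∑' k : {k : ℤ // r < |(k : ℝ) - Real.log u|}, |φ (Real.exp (-(k:ℤ)) * u)| < ε)
    (hfbd : ∃ B : ℝ, ∀ x : ℝ, 0 < x → |f x| ≤ B)
    (x : ℝ) (hx : 0 < x) (hfx : ContinuousAt f x) :
    Tendsto (fun w : ℝ => expSampling φ f w x) atTop (nhds (f x)) := by
  obtain ⟨M, hM⟩ := hM0
  obtain ⟨B, hB⟩ := hfbd
  set M' := max M 1 with hM'def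
  have hM'pos : (0:ℝ) < M' := lt_of_lt_of_le one_pos (le_max_right M 1)
  have hMM' : ∀ u : ℝ, 0 < u → ∑' k : ℤ, |φ (Real.exp (-k) * u)| ≤ M' :=
    fun u hu => (hM u hu).trans (le_max_left _ _)
  set B' := max B 0 with hB'def
  have hB'nonneg : (0:ℝ) ≤ B' := le_max_right B 0
  have hfB' : ∀ y : ℝ, 0 < y → |f y| ≤ B' := fun y hy => (hB y hy).trans (le_max_left _ _)
  rw [Metric.tendsto_atTop]
  intro ε hε
  set εf := ε / (2 * M') with hεfdef
  have hεfpos : 0 < εf := div_pos hε (by positivity)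
  set εt := ε / (2 * (2 * B' + 1)) with hεtdef
  have hεtpos : 0 < εt := div_pos hε (by positivity)
  rw [Metric.continuousAt_iff] at hfx
  obtain ⟨δ, hδpos, hδf⟩ := hfx εf hεfpos
  have hexp := (Real.continuous_exp.continuousAt (x := Real.log x))
  rw [Metric.continuousAt_iff] at hexp
  obtain ⟨δ', hδ'pos, hδ'⟩ := hexp δ hδpos
  obtain ⟨r₀, hr₀⟩ := htail εt hεtpos
  set r := max r₀ 0 with hrdef
  refine ⟨max (r / δ' + 1) 1, fun w hw => ?_⟩
  have hw1 : (1:ℝ) ≤ w := le_trans (le_max_right _ _) hw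
  have hw0 : (0:ℝ) < w := lt_of_lt_of_le one_pos hw1
  have hrw : r / w < δ' := by
    rw [div_lt_iff₀ hw0]
    have hle : r / δ' + 1 ≤ w := le_trans (le_max_left _ _) hw
    have h1 : δ' * (r / δ' + 1) ≤ δ' * w := mul_le_mul_of_nonneg_left hle hδ'pos.le
    have h2 : δ' * (r / δ' + 1) = r + δ' := by field_simp
    linarith
  set u := x ^ w with hudef
  have hu : 0 < u := Real.rpow_pos_of_pos hx w
  have hlogu : Real.log u = w * Real.log x := Real.log_rpow hx w
  have hsφ : Summable fun k : ℤ => |φ (Real.exp (-k) * u)| := hsum u hu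
  have hsφ' : Summable fun k : ℤ => φ (Real.exp (-k) * u) := hsφ.of_abs
  set g : ℤ → ℝ := fun k => (f (Real.exp (k / w)) - f x) * φ (Real.exp (-k) * u) with hgdef
  have hgabs_le : ∀ k : ℤ, |g k| ≤ 2 * B' * |φ (Real.exp (-k) * u)| := by
    intro k
    have hfd : |f (Real.exp (k / w)) - f x| ≤ 2 * B' := by
      have h1 := hfB' _ (Real.exp_pos ((k:ℝ) / w))
      have h2 := hfB' x hx
      have h3 := abs_sub (f (Real.exp ((k:ℝ) / w))) (f x)
      linarith
    calc |g k| = |f (Real.exp (k / w)) - f x| * |φ (Real.exp (-k) * u)| := by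
          rw [hgdef, abs_mul]
      _ ≤ 2 * B' * |φ (Real.exp (-k) * u)| :=
          mul_le_mul_of_nonneg_right hfd (abs_nonneg _)
  have hsgabs : Summable fun k : ℤ => |g k| :=
    Summable.of_nonneg_of_le (fun k => abs_nonneg _) hgabs_le (hsφ.mul_left (2 * B'))
  have hsg : Summable g := hsgabs.of_abs
  have hfsum : Summable fun k : ℤ => f (Real.exp (k / w)) * φ (Real.exp (-k) * u) := by
    apply Summable.of_abs
    apply Summable.of_nonneg_of_le (fun k => abs_nonneg _) (fun k => ?_) (hsφ.mul_left B')
    rw [abs_mul]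
    exact mul_le_mul_of_nonneg_right (hfB' _ (Real.exp_pos _)) (abs_nonneg _)
  have hkey : expSampling φ f w x - f x = ∑' k, g k := by
    have h1 : ∑' k : ℤ, f x * φ (Real.exp (-k) * u) = f x := by
      rw [tsum_mul_left, hpart u hu, mul_one]
    have h2 : g = fun k : ℤ =>
        f (Real.exp (k / w)) * φ (Real.exp (-k) * u) - f x * φ (Real.exp (-k) * u) := by
      funext k; rw [hgdef]; ring
    rw [h2, Summable.tsum_sub hfsum (hsφ'.mul_left (f x)), h1]
    rfl
  have habs : |expSampling φ f w x - f x| ≤ ∑' k, |g k| := by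
    rw [hkey]
    calc |∑' k, g k| = ‖∑' k, g k‖ := (Real.norm_eq_abs _).symm
      _ ≤ ∑' k, ‖g k‖ := norm_tsum_le_tsum_norm (by simpa [Real.norm_eq_abs] using hsgabs)
      _ = ∑' k, |g k| := by simp [Real.norm_eq_abs]
  set S : Set ℤ := {k : ℤ | r < |(k:ℝ) - Real.log u|} with hSdef
  have hsplit : (∑' k : S, |g k|) + (∑' k : ↥Sᶜ, |g k|) = ∑' k, |g k| :=
    Summable.tsum_subtype_add_tsum_subtype_compl hsgabs S
  -- tail estimate
  have htail' : ∑' k : S, |φ (Real.exp (-(k:ℤ)) * u)| < εt :=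
    hr₀ r (le_max_left _ _) u hu
  have h4 : (∑' k : S, |g k|) ≤ 2 * B' * εt := by
    calc (∑' k : S, |g k|) ≤ ∑' k : S, 2 * B' * |φ (Real.exp (-(k:ℤ)) * u)| :=
          Summable.tsum_le_tsum (fun k => hgabs_le k) (hsgabs.subtype S)
            ((hsφ.mul_left (2 * B')).subtype S)
      _ = 2 * B' * ∑' k : S, |φ (Real.exp (-(k:ℤ)) * u)| := tsum_mul_left
      _ ≤ 2 * B' * εt := mul_le_mul_of_nonneg_left htail'.le (by positivity)
  -- near estimate
  have hnear : ∀ k : ↥Sᶜ, |g k| ≤ εf * |φ (Real.exp (-(k:ℤ)) * u)| := by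
    rintro ⟨k, hk⟩
    have hk' : |(k:ℝ) - Real.log u| ≤ r := not_lt.mp hk
    have hdist : dist ((k:ℝ) / w) (Real.log x) < δ' := by
      rw [Real.dist_eq]
      have heq : (k:ℝ) / w - Real.log x = ((k:ℝ) - Real.log u) / w := by
        rw [hlogu]; field_simp
      rw [heq, abs_div, abs_of_pos hw0]
      calc |(k:ℝ) - Real.log u| / w ≤ r / w := by gcongr
        _ < δ' := hrw
    have h5 : dist (Real.exp ((k:ℝ) / w)) x < δ := by
      have := hδ' hdist
      rwa [Real.exp_log hx] at this
    have h6 : |f (Real.exp ((k:ℝ) / w)) - f x| < εf := by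
      have := hδf h5
      rwa [Real.dist_eq] at this
    calc |g k| = |f (Real.exp ((k:ℝ) / w)) - f x| * |φ (Real.exp (-(k:ℤ)) * u)| := by
          rw [hgdef, abs_mul]
      _ ≤ εf * |φ (Real.exp (-(k:ℤ)) * u)| :=
          mul_le_mul_of_nonneg_right h6.le (abs_nonneg _)
  have hφcompl : (∑' k : ↥Sᶜ, |φ (Real.exp (-(k:ℤ)) * u)|) ≤ M' := by
    have hsplitφ : (∑' k : S, |φ (Real.exp (-(k:ℤ)) * u)|)
        + (∑' k : ↥Sᶜ, |φ (Real.exp (-(k:ℤ)) * u)|) = ∑' k : ℤ, |φ (Real.exp (-k) * u)| :=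
      Summable.tsum_subtype_add_tsum_subtype_compl hsφ S
    have hpos : (0:ℝ) ≤ ∑' k : S, |φ (Real.exp (-(k:ℤ)) * u)| :=
      tsum_nonneg fun k => abs_nonneg _
    have := hMM' u hu
    linarith
  have h7 : (∑' k : ↥Sᶜ, |g k|) ≤ εf * M' := by
    calc (∑' k : ↥Sᶜ, |g k|) ≤ ∑' k : ↥Sᶜ, εf * |φ (Real.exp (-(k:ℤ)) * u)| :=
          Summable.tsum_le_tsum hnear (hsgabs.subtype Sᶜ) ((hsφ.mul_left εf).subtype Sᶜ)
      _ = εf * ∑' k : ↥Sᶜ, |φ (Real.exp (-(k:ℤ)) * u)| := tsum_mul_left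
      _ ≤ εf * M' := mul_le_mul_of_nonneg_left hφcompl hεfpos.le
  have e1 : εf * M' = ε / 2 := by
    rw [hεfdef]; field_simp
  have e3 : (2 * B' + 1) * εt = ε / 2 := by
    rw [hεtdef]; field_simp
  have expand : (2 * B' + 1) * εt = 2 * B' * εt + εt := by ring
  rw [Real.dist_eq]
  calc |expSampling φ f w x - f x| ≤ ∑' k, |g k| := habs
    _ = (∑' k : S, |g k|) + (∑' k : ↥Sᶜ, |g k|) := hsplit.symm
    _ ≤ 2 * B' * εt + εf * M' := add_le_add h4 h7
    _ < ε := by linarith
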